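/- Continuous perturbation estimate: let H be a real Hilbert space, γ > 0, F ≥ 0, T > 0, and let z : ℝ → H be differentiable on [0,T] with z(0) = 0. Suppose that for all t ∈ [0,T], ⟨z′(t), z(t)⟩ ≤ F·‖z(t)‖ − γ·‖z(t)‖². Then for all t ∈ [0,T], ‖z(t)‖ ≤ (F/γ)·(1 − e^{−γ t}). -/

import Mathlib

open RealInnerProductSpace

/-- **Continuous perturbation estimate.** Let `H` be a real Hilbert space,
`γ > 0`, `F ≥ 0`, `T > 0`, and let `z : ℝ → H` be differentiable on `[0,T]`
with `z 0 = 0`. Suppose that for all `t ∈ [0,T]`,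
`⟪z' t, z t⟫ ≤ F * ‖z t‖ − γ * ‖z t‖²`. Then for all `t ∈ [0,T]`,
`‖z t‖ ≤ (F/γ) * (1 − e^{−γt})`. -/
theorem continuous_perturbation_estimate
    {H : Type*} [NormedAddCommGroup H] [InnerProductSpace ℝ H] [CompleteSpace H]
    (γ F T : ℝ) (hγ : 0 < γ) (hF : 0 ≤ F) (hT : 0 < T)
    (z z' : ℝ → H)
    (hderiv : ∀ t ∈ Set.Icc (0 : ℝ) T, HasDerivAt z (z' t) t)
    (hz0 : z 0 = 0)
    (hineq : ∀ t ∈ Set.Icc (0 : ℝ) T,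
      ⟪z' t, z t⟫ ≤ F * ‖z t‖ - γ * ‖z t‖ ^ 2) :
    ∀ t ∈ Set.Icc (0 : ℝ) T, ‖z t‖ ≤ (F / γ) * (1 - Real.exp (-(γ * t))) := by
  classical
  intro t ht
  refine le_of_forall_pos_le_add fun δ hδ => ?_
  set B : ℝ → ℝ := fun s => F / γ * (1 - Real.exp (-(γ * s))) + δ with hB_def
  set B' : ℝ → ℝ := fun s => F * Real.exp (-(γ * s)) with hB'_def
  set f : ℝ → ℝ := fun s => ‖z s‖ with hf_def
  set f' : ℝ → ℝ := fun s =>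
    if z s = 0 then ‖z' s‖ else ⟪z' s, z s⟫ / ‖z s‖ with hf'_def
  have hzc : ContinuousOn z (Set.Icc 0 T) := fun s hs =>
    (hderiv s hs).continuousAt.continuousWithinAt
  have hBexp : ∀ s : ℝ, 0 ≤ s → 0 < B s := by
    intro s hs
    have h1 : Real.exp (-(γ * s)) ≤ 1 := by
      apply Real.exp_le_one_iff.mpr
      nlinarith [mul_nonneg hγ.le hs]
    have : 0 ≤ F / γ * (1 - Real.exp (-(γ * s))) :=
      mul_nonneg (div_nonneg hF hγ.le) (by linarith)
    simp only [hB_def]; linarith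
  have hB' : ∀ s : ℝ, HasDerivAt B (B' s) s := by
    intro s
    have h1 : HasDerivAt (fun u : ℝ => -(γ * u)) (-γ) s := by
      have := ((hasDerivAt_id s).const_mul γ).neg
      simp only [mul_one, id_eq] at this
      exact this
    have h2 : HasDerivAt (fun u : ℝ => Real.exp (-(γ * u)))
        (Real.exp (-(γ * s)) * (-γ)) s := h1.exp
    have h3 : HasDerivAt B (F / γ * (0 - Real.exp (-(γ * s)) * (-γ))) s :=
      (((hasDerivAt_const s (1:ℝ)).sub h2).const_mul (F / γ)).add_const δ
    convert h3 using 1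
    field_simp [hB'_def]
    ring
  have key : ∀ ⦃x⦄, x ∈ Set.Icc (0:ℝ) T → f x ≤ B x := by
    apply image_le_of_liminf_slope_right_lt_deriv_boundary
      (f := f) (f' := f') (B := B) (B' := B')
    · exact (continuous_norm.comp_continuousOn hzc)
    · -- slope condition
      intro x hx r hr
      have hxT : x ∈ Set.Icc (0:ℝ) T := Set.mem_Icc.mpr ⟨hx.1, hx.2.le⟩
      have hz' := hderiv x hxT
      have hle : nhdsWithin x (Set.Ioi x) ≤ nhdsWithin x {x}ᶜ :=
        nhdsWithin_mono x fun y hy => ne_of_gt hy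
      by_cases hzx : z x = 0
      · have hs : Filter.Tendsto (slope z x) (nhdsWithin x {x}ᶜ) (nhds (z' x)) :=
          hasDerivAt_iff_tendsto_slope.mp hz'
        have hnorm : Filter.Tendsto (fun y => ‖slope z x y‖) (nhdsWithin x {x}ᶜ)
            (nhds ‖z' x‖) := hs.norm
        have heq : ∀ y ∈ Set.Ioi x, ‖slope z x y‖ = slope f x y := by
          intro y hy
          have hyx : (0:ℝ) < y - x := sub_pos.mpr hy
          have h1 : ‖slope z x y‖ = ‖z y‖ / (y - x) := by
            rw [slope, vsub_eq_sub, hzx, sub_zero, norm_smul, norm_inv,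
              Real.norm_eq_abs, abs_of_pos hyx, inv_mul_eq_div]
          have h2 : slope f x y = ‖z y‖ / (y - x) := by
            rw [slope_def_field, hf_def]
            simp [hzx]
          rw [h1, h2]
        have htend : Filter.Tendsto (slope f x) (nhdsWithin x (Set.Ioi x)) (nhds ‖z' x‖) := by
          refine Filter.Tendsto.congr' ?_ (hnorm.mono_left hle)
          filter_upwards [self_mem_nhdsWithin] with y hy using heq y hy
        have hr' : ‖z' x‖ < r := by rw [hf'_def] at hr; simpa [hzx] using hr
        exact (htend.eventually_lt_const hr').frequently
      · have hg : HasDerivAt (fun s => ⟪z s, z s⟫) (⟪z x, z' x⟫ + ⟪z' x, z x⟫) x :=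
          hz'.inner ℝ hz'
        have hgx : ⟪z x, z x⟫ ≠ (0:ℝ) := by
          simpa [inner_self_eq_zero] using hzx
        have hsq : HasDerivAt (fun s => Real.sqrt ⟪z s, z s⟫)
            (1 / (2 * Real.sqrt ⟪z x, z x⟫) * (⟪z x, z' x⟫ + ⟪z' x, z x⟫)) x := by
          simpa [Function.comp_def] using (Real.hasDerivAt_sqrt hgx).comp x hg
        have hnz : ‖z x‖ ≠ 0 := norm_ne_zero_iff.mpr hzx
        have hfd : HasDerivAt f (⟪z' x, z x⟫ / ‖z x‖) x := by
          have hfeq : f = fun s => Real.sqrt ⟪z s, z s⟫ := by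
            funext s
            rw [hf_def, real_inner_self_eq_norm_sq, Real.sqrt_sq (norm_nonneg _)]
          rw [hfeq]
          convert hsq using 1
          rw [real_inner_comm (z x) (z' x), real_inner_self_eq_norm_sq,
            Real.sqrt_sq (norm_nonneg _)]
          field_simp
          ring
        have hs : Filter.Tendsto (slope f x) (nhdsWithin x {x}ᶜ)
            (nhds (⟪z' x, z x⟫ / ‖z x‖)) := hasDerivAt_iff_tendsto_slope.mp hfd
        have hr' : ⟪z' x, z x⟫ / ‖z x‖ < r := by
          rw [hf'_def] at hr; simpa [hzx] using hr
        exact ((hs.mono_left hle).eventually_lt_const hr').frequently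
    · simp [hf_def, hz0, hB_def, hδ.le]
    · exact hB'
    · -- contact bound
      intro x hx hcontact
      have hxT : x ∈ Set.Icc (0:ℝ) T := Set.mem_Icc.mpr ⟨hx.1, hx.2.le⟩
      have hc : ‖z x‖ = B x := hcontact
      have hpos : 0 < ‖z x‖ := by rw [hc]; exact hBexp x hx.1
      have hzx : z x ≠ 0 := by
        intro h; rw [h] at hpos; simp at hpos
      have hle : ⟪z' x, z x⟫ / ‖z x‖ ≤ F - γ * ‖z x‖ := by
        rw [div_le_iff₀ hpos]
        have := hineq x hxT
        nlinarith
      have hBx : ‖z x‖ = F / γ * (1 - Real.exp (-(γ * x))) + δ := hc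
      rw [hf'_def]
      simp only [hzx, if_false]
      have heq2 : F - γ * ‖z x‖ = F * Real.exp (-(γ * x)) - γ * δ := by
        rw [hBx]; field_simp; ring
      have hγδ : 0 < γ * δ := mul_pos hγ hδ
      calc ⟪z' x, z x⟫ / ‖z x‖ ≤ F - γ * ‖z x‖ := hle
        _ = F * Real.exp (-(γ * x)) - γ * δ := heq2
        _ < F * Real.exp (-(γ * x)) := by linarith
  have := key ht
  simpa [hf_def, hB_def] using this
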